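/- Let n ≥ 5 be odd. Define r(v_i) = (-1)^{i-1}·i for i ∈ {1,...,n-1} and r(v_n) = n - 1/2, and set thresholds θ_1 = -1.1, θ_2 = 1.1, θ_3 = n + 0.4, θ_4 = n + 0.6. Then for any two distinct vertices u, v of C_n, uv is an edge of C_n if and only if the number of indices i ∈ {1,2,3,4} with θ_i ≤ r(u) + r(v) is odd. Hence C_n is a 4-threshold graph. -/

import Mathlib

/-- The interval condition equivalent to the odd filter count. -/
def Pcond (n : ℕ) (s : ℝ) : Prop :=
  ((-1.1:ℝ) ≤ s ∧ s < 1.1) ∨ ((n:ℝ)+0.4 ≤ s ∧ s < (n:ℝ)+0.6)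

lemma oddCard (n : ℕ) (hn : 5 ≤ n) (s : ℝ) :
    Odd ((Finset.univ.filter
      (fun i => (![(-1.1 : ℝ), 1.1, (n:ℝ)+0.4, (n:ℝ)+0.6]) i ≤ s)).card) ↔ Pcond n s := by
  have hn' : (5:ℝ) ≤ n := by exact_mod_cast hn
  rw [Finset.card_filter, Fin.sum_univ_four]
  simp only [Matrix.cons_val_zero, Matrix.cons_val_one, Matrix.head_cons,
    Matrix.cons_val_two, Matrix.tail_cons, Matrix.cons_val_three]
  change Odd ((((if (-1.1:ℝ) ≤ s then 1 else 0) + if (1.1:ℝ) ≤ s then 1 else 0) + (if (n:ℝ)+0.4 ≤ s then 1 else 0)) + if (n:ℝ)+0.6 ≤ s then 1 else 0) ↔ _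
  unfold Pcond
  rcases lt_or_ge s (-1.1:ℝ) with h1 | h1
  · rw [if_neg (by linarith), if_neg (by linarith), if_neg (by linarith), if_neg (by linarith)]
    refine iff_of_false (by decide) ?_
    rintro (⟨p,q⟩|⟨p,q⟩) <;> linarith
  · rcases lt_or_ge s (1.1:ℝ) with h2 | h2
    · rw [if_pos h1, if_neg (by linarith), if_neg (by linarith), if_neg (by linarith)]
      exact iff_of_true (by decide) (Or.inl ⟨h1, h2⟩)
    · rcases lt_or_ge s ((n:ℝ)+0.4) with h3 | h3
      · rw [if_pos h1, if_pos h2, if_neg (by linarith), if_neg (by linarith)]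
        refine iff_of_false (by decide) ?_
        rintro (⟨p,q⟩|⟨p,q⟩) <;> linarith
      · rcases lt_or_ge s ((n:ℝ)+0.6) with h4 | h4
        · rw [if_pos h1, if_pos h2, if_pos h3, if_neg (by linarith)]
          exact iff_of_true (by decide) (Or.inr ⟨h3, h4⟩)
        · rw [if_pos h1, if_pos h2, if_pos h3, if_pos h4]
          refine iff_of_false (by decide) ?_
          rintro (⟨p,q⟩|⟨p,q⟩) <;> linarith

lemma int_window (m : ℤ) : ((-1.1:ℝ) ≤ (m:ℝ) ∧ (m:ℝ) < 1.1) ↔ (m = -1 ∨ m = 0 ∨ m = 1) := by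
  constructor
  · rintro ⟨h1, h2⟩
    have h1' : (-2 : ℤ) < m := by exact_mod_cast (by push_cast; linarith : ((-2:ℤ):ℝ) < (m:ℝ))
    have h2' : m < 2 := by exact_mod_cast (by push_cast; linarith : (m:ℝ) < ((2:ℤ):ℝ))
    omega
  · rintro (rfl|rfl|rfl) <;> norm_num

lemma int_no_window (n : ℕ) (m : ℤ) : ¬(((n:ℝ)+0.4 ≤ (m:ℝ)) ∧ (m:ℝ) < (n:ℝ)+0.6) := by
  rintro ⟨h1, h2⟩
  have h1' : (n:ℤ) < m := by exact_mod_cast (by push_cast; linarith : (((n:ℕ):ℤ):ℝ) < (m:ℝ))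
  have h2' : m < (n:ℤ)+1 := by exact_mod_cast (by push_cast; linarith : (m:ℝ) < (((n:ℤ)+1 :ℤ):ℝ))
  omega

lemma generic (n a b : ℕ) (hn : 5 ≤ n) (ha : a < n-1) (hb : b < n-1) (hab : a ≠ b) :
    ((a+1) % n = b ∨ (b+1) % n = a) ↔
      Pcond n ((-1:ℝ)^a * ((a:ℝ)+1) + (-1:ℝ)^b * ((b:ℝ)+1)) := by
  have hmod1 : (a+1) % n = a+1 := Nat.mod_eq_of_lt (by omega)
  have hmod2 : (b+1) % n = b+1 := Nat.mod_eq_of_lt (by omega)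
  rw [hmod1, hmod2]
  have hm : (((((-1:ℤ)^a * ((a:ℤ)+1) + (-1:ℤ)^b * ((b:ℤ)+1)):ℤ)):ℝ)
      = (-1:ℝ)^a * ((a:ℝ)+1) + (-1:ℝ)^b * ((b:ℝ)+1) := by push_cast; ring
  unfold Pcond
  rw [← hm, or_iff_left (int_no_window n _), int_window]
  rcases Nat.even_or_odd a with hea | hoa <;> rcases Nat.even_or_odd b with heb | hob
  · rw [hea.neg_one_pow, heb.neg_one_pow]
    obtain ⟨k, hk⟩ := hea; obtain ⟨l, hl⟩ := heb; omega
  · rw [hea.neg_one_pow, hob.neg_one_pow]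
    obtain ⟨k, hk⟩ := hea; obtain ⟨l, hl⟩ := hob; omega
  · rw [hoa.neg_one_pow, heb.neg_one_pow]
    obtain ⟨k, hk⟩ := hoa; obtain ⟨l, hl⟩ := heb; omega
  · rw [hoa.neg_one_pow, hob.neg_one_pow]
    obtain ⟨k, hk⟩ := hoa; obtain ⟨l, hl⟩ := hob; omega

lemma special (n b : ℕ) (hn : 5 ≤ n) (hodd : Odd n) (hb : b < n - 1) :
    (((n-1)+1) % n = b ∨ (b+1) % n = n-1) ↔
      Pcond n (((n:ℝ) - 1/2) + (-1:ℝ)^b * ((b:ℝ)+1)) := by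
  have hn' : (5:ℝ) ≤ (n:ℝ) := by exact_mod_cast hn
  have hbn : (0:ℝ) ≤ (b:ℝ) := Nat.cast_nonneg b
  have h1 : ((n-1)+1) % n = 0 := by
    have h : (n-1)+1 = n := by omega
    rw [h, Nat.mod_self]
  have h2 : (b+1) % n = b+1 := Nat.mod_eq_of_lt (by omega)
  rw [h1, h2]
  unfold Pcond
  rcases Nat.even_or_odd b with he | ho
  · rw [he.neg_one_pow]
    constructor
    · rintro (h | h)
      · have : b = 0 := h.symm
        subst this
        right; constructor <;> [push_cast; push_cast] <;> linarith
      · exfalso; obtain ⟨k, hk⟩ := he; obtain ⟨j, hj⟩ := hodd; omega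
    · rintro (⟨p, q⟩ | ⟨p, q⟩)
      · exfalso; linarith
      · left
        have hb1 : (b:ℝ) < 1 := by linarith
        have : b < 1 := by exact_mod_cast hb1
        omega
  · rw [ho.neg_one_pow]
    constructor
    · rintro (h | h)
      · exfalso; obtain ⟨k, hk⟩ := ho; omega
      · have hb2 : b = n - 2 := by omega
        have hbr : (b:ℝ) = (n:ℝ) - 2 := by
          subst hb2; push_cast [Nat.cast_sub (by omega : 2 ≤ n)]; ring
        left; constructor <;> linarith
    · rintro (⟨p, q⟩ | ⟨p, q⟩)
      · right
        have h3 : (n:ℝ) < (b:ℝ) + 3 := by linarith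
        have : n < b + 3 := by exact_mod_cast h3
        omega
      · exfalso; linarith

lemma main_nat (n a b : ℕ) (hn : 5 ≤ n) (hodd : Odd n) (ha : a < n) (hb : b < n)
    (hab : a ≠ b) :
    ((a+1) % n = b ∨ (b+1) % n = a) ↔
      Pcond n ((if a = n-1 then (n:ℝ) - 1/2 else (-1:ℝ)^a * ((a:ℝ)+1)) +
               (if b = n-1 then (n:ℝ) - 1/2 else (-1:ℝ)^b * ((b:ℝ)+1))) := by
  rcases eq_or_ne a (n-1) with ha1 | ha1 <;> rcases eq_or_ne b (n-1) with hb1 | hb1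
  · exact absurd (ha1.trans hb1.symm) hab
  · subst ha1
    rw [if_pos rfl, if_neg hb1]
    exact special n b hn hodd (by omega)
  · subst hb1
    rw [if_neg ha1, if_pos rfl, or_comm, add_comm ((-1:ℝ)^a * ((a:ℝ)+1)) ((n:ℝ) - 1/2)]
    exact special n a hn hodd (by omega)
  · rw [if_neg ha1, if_neg hb1]
    exact generic n a b hn (by omega) (by omega) hab

open Classical in
/-- For odd n ≥ 5, the explicit ranks r(vᵢ) = (-1)^(i-1)·i (for i ∈ [n-1]),
r(vₙ) = n - 1/2, with thresholds -1.1, 1.1, n + 0.4, n + 0.6, give a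
4-threshold representation of Cₙ.  (Vertex vᵢ corresponds to index i-1 in Fin n.) -/
theorem cn_odd_four_threshold_explicit (n : ℕ) (hn : 5 ≤ n) (hodd : Odd n) :
    let r : Fin n → ℝ := fun i =>
      if (i : ℕ) = n - 1 then (n : ℝ) - 1/2 else (-1 : ℝ) ^ (i : ℕ) * ((i : ℕ) + 1)
    let θ : Fin 4 → ℝ := ![-1.1, 1.1, (n : ℝ) + 0.4, (n : ℝ) + 0.6]
    ∀ u v : Fin n, u ≠ v →
      ((SimpleGraph.cycleGraph n).Adj u v ↔
        Odd (Finset.univ.filter (fun i => θ i ≤ r u + r v)).card) := by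
  intro r θ u v huv
  haveI : NeZero n := ⟨by omega⟩
  have h1v : (1 : Fin n).val = 1 := by
    rw [Fin.val_one']; exact Nat.mod_eq_of_lt (by omega)
  have key : ∀ a b : Fin n, (a - b).val = 1 ↔ (b.val + 1) % n = a.val := by
    intro a b
    rw [show ((a - b).val = 1) ↔ (a - b = 1) from by rw [Fin.ext_iff, h1v],
      sub_eq_iff_eq_add, Fin.ext_iff, Fin.val_add, h1v]
    constructor
    · intro h; rw [h, add_comm]
    · intro h; rw [← h, add_comm]
  rw [SimpleGraph.cycleGraph_adj', key, key, or_comm]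
  refine Iff.trans (main_nat n u.val v.val hn hodd u.isLt v.isLt (fun h => huv (Fin.ext h))) ?_
  exact (oddCard n hn (r u + r v)).symm
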